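/- Given a family of κ-Kurepa trees (T_i)_{i<μ} indexed by μ ≤ κ, where T_i has exactly κ_i cofinal branches, there exists a κ-Kurepa tree with exactly sup_{i<μ} κ_i cofinal branches. -/

import Mathlib

open Cardinal

/-- A set-theoretic tree: a transitive well-founded relation in which the
predecessors of any element are linearly ordered. -/
structure STree : Type 1 where
  σ : Type
  lt : σ → σ → Prop
  lt_trans : ∀ a b c, lt a b → lt b c → lt a c
  wf : WellFounded lt
  pred_linear : ∀ c a b, lt a c → lt b c → a = b ∨ lt a b ∨ lt b a

/-- The level (rank) of a node of a tree. -/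
noncomputable def STree.rank (T : STree) (x : T.σ) : Ordinal := (T.wf.apply x).rank

/-- A cofinal branch of height `κ`: a downward-closed chain meeting every level below `κ.ord`. -/
def STree.IsCofBranch (T : STree) (κ : Cardinal) (B : Set T.σ) : Prop :=
  (∀ x ∈ B, ∀ y, T.lt y x → y ∈ B) ∧
  (∀ x ∈ B, ∀ y ∈ B, x = y ∨ T.lt x y ∨ T.lt y x) ∧
  (∀ o : Ordinal, o < κ.ord → ∃ x ∈ B, T.rank x = o)

/-- The number of cofinal branches of height `κ`. -/
noncomputable def STree.branchCard (T : STree) (κ : Cardinal) : Cardinal :=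
  #{B : Set T.σ // T.IsCofBranch κ B}

/-- A `κ`-Kurepa tree: height `κ`, levels of size `< κ`, and at least `κ⁺` cofinal branches. -/
def IsKurepaTree (κ : Cardinal) (T : STree) : Prop :=
  ℵ₀ ≤ κ ∧
  (∀ x : T.σ, T.rank x < κ.ord) ∧
  (∀ o : Ordinal, o < κ.ord → ∃ x : T.σ, T.rank x = o) ∧
  (∀ o : Ordinal, #{x : T.σ // T.rank x = o} < κ) ∧
  Order.succ κ ≤ T.branchCard κ

/-- Gluing at most `κ` many `κ`-Kurepa trees with `κ_i` cofinal branches each yields a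
`κ`-Kurepa tree with exactly `sup_i κ_i` cofinal branches. -/
theorem STree.rank_eq (T : STree) (x : T.σ) :
    T.rank x = ⨆ y : {y // T.lt y x}, Order.succ (T.rank y) := by
  rw [STree.rank, Acc.rank_eq]
  exact iSup_congr fun y =>
    congrArg Order.succ (congrArg Acc.rank (Subsingleton.elim _ _))

theorem STree.rank_lt_of_lt (T : STree) {x y : T.σ} (h : T.lt x y) : T.rank x < T.rank y := by
  rw [T.rank_eq y]
  calc T.rank x < Order.succ (T.rank x) := Order.lt_succ _
  _ ≤ _ := Ordinal.le_iSup (fun z : {z // T.lt z y} => Order.succ (T.rank z)) ⟨x, h⟩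

namespace KGlue

open Ordinal

variable (κ : Cardinal.{0}) {ι : Type} (T : ι → STree) (g : ι ↪ κ.ord.ToType)

/-- The position of an element of `κ.ord.ToType`. -/
noncomputable def θ {o : Ordinal.{0}} (c : o.ToType) : Ordinal :=
  @Ordinal.typein o.ToType (· < ·) isWellOrder_lt c

theorem θ_lt {o : Ordinal.{0}} (c : o.ToType) : θ c < o := by
  have := @Ordinal.typein_lt_type o.ToType (· < ·) isWellOrder_lt c
  rwa [Ordinal.type_toType] at this

theorem θ_lt_θ {o : Ordinal.{0}} {c c' : o.ToType} : θ c < θ c' ↔ c < c' :=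
  @Ordinal.typein_lt_typein o.ToType (· < ·) isWellOrder_lt c c'

theorem θ_injective {o : Ordinal.{0}} : Function.Injective (θ (o := o)) :=
  @Ordinal.typein_injective o.ToType (· < ·) isWellOrder_lt

theorem θ_surj {o : Ordinal.{0}} {β : Ordinal} (h : β < o) : ∃ c : o.ToType, θ c = β := by
  have := @Ordinal.typein_surj o.ToType (· < ·) isWellOrder_lt β
    (by rwa [Ordinal.type_toType])
  obtain ⟨c, hc⟩ := this
  exact ⟨c, hc⟩

/-- The shift of the `i`-th tree. -/
noncomputable def f (i : ι) : Ordinal := θ (g i)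

theorem f_lt (i : ι) : f κ g i < κ.ord := θ_lt _

theorem f_inj : Function.Injective (f κ g) := fun i j h =>
  g.injective (θ_injective h)

/-- Nodes of the glued tree. -/
def Node : Type := κ.ord.ToType ⊕ (Σ i, (T i).σ)

/-- The order on the glued tree. -/
noncomputable def glt : Node κ T → Node κ T → Prop
  | .inl c, .inl c' => c < c'
  | .inl c, .inr b => θ c < f κ g b.1
  | .inr _, .inl _ => False
  | .inr a, .inr b => ∃ h : a.1 = b.1, (T b.1).lt (h ▸ a.2) b.2

theorem glt_inr_inr {a b : Σ i, (T i).σ} :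
    glt κ T g (.inr a) (.inr b) ↔ ∃ h : a.1 = b.1, (T b.1).lt (h ▸ a.2) b.2 := Iff.rfl

theorem glt_inr_inr' {i : ι} {x y : (T i).σ} :
    glt κ T g (.inr ⟨i, x⟩) (.inr ⟨i, y⟩) ↔ (T i).lt x y := by
  constructor
  · rintro ⟨h, hlt⟩; exact hlt
  · intro h; exact ⟨rfl, h⟩

/-- The rank function, computed explicitly. -/
noncomputable def ϕ : Node κ T → Ordinal
  | .inl c => θ c
  | .inr a => f κ g a.1 + (T a.1).rank a.2

theorem ϕ_strictMono {a b : Node κ T} (h : glt κ T g a b) : ϕ κ T g a < ϕ κ T g b := by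
  match a, b with
  | .inl c, .inl c' =>
      exact θ_lt_θ.2 h
  | .inl c, .inr b =>
      exact lt_of_lt_of_le h (le_self_add)
  | .inr a, .inl c => exact absurd h id
  | .inr ⟨i, x⟩, .inr ⟨j, y⟩ =>
      obtain ⟨hij, hlt⟩ := h
      dsimp at hij; subst hij
      exact add_lt_add_right ((T i).rank_lt_of_lt hlt) _

theorem glt_wf : WellFounded (glt κ T g) := by
  have : Subrelation (glt κ T g) (InvImage (· < ·) (ϕ κ T g)) :=
    fun h => ϕ_strictMono κ T g h
  exact Subrelation.wf this (InvImage.wf _ Ordinal.lt_wf)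

theorem glt_trans : ∀ a b c, glt κ T g a b → glt κ T g b c → glt κ T g a c := by
  rintro (c₁ | ⟨i, x⟩) (c₂ | ⟨j, y⟩) (c₃ | ⟨l, z⟩) h1 h2
  · exact lt_trans h1 h2
  · exact lt_trans (θ_lt_θ.2 h1) h2
  · exact h2.elim
  · obtain ⟨hjl, -⟩ := h2; dsimp only at hjl; subst hjl; exact h1
  · exact h1.elim
  · exact h1.elim
  · exact h2.elim
  · obtain ⟨hij, h1'⟩ := h1; obtain ⟨hjl, h2'⟩ := h2
    dsimp only at hij hjl; subst hjl; subst hij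
    exact ⟨rfl, (T _).lt_trans _ _ _ h1' h2'⟩

theorem glt_pred_linear : ∀ c a b, glt κ T g a c → glt κ T g b c →
    a = b ∨ glt κ T g a b ∨ glt κ T g b a := by
  rintro (c | ⟨i, x⟩) (c' | ⟨j, y⟩) (c'' | ⟨l, z⟩) h1 h2
  · rcases lt_trichotomy c' c'' with h | h | h
    · exact Or.inr (Or.inl h)
    · exact Or.inl (by rw [h])
    · exact Or.inr (Or.inr h)
  · exact h2.elim
  · exact h1.elim
  · exact h1.elim
  · rcases lt_trichotomy c' c'' with h | h | h
    · exact Or.inr (Or.inl h)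
    · exact Or.inl (by rw [h])
    · exact Or.inr (Or.inr h)
  · obtain ⟨hli, -⟩ := h2; dsimp only at hli; subst hli
    exact Or.inr (Or.inl h1)
  · obtain ⟨hji, -⟩ := h1; dsimp only at hji; subst hji
    exact Or.inr (Or.inr h2)
  · obtain ⟨hji, h1'⟩ := h1; obtain ⟨hli, h2'⟩ := h2
    dsimp only at hji hli; subst hji; subst hli
    rcases (T _).pred_linear x _ _ h1' h2' with h | h | h
    · exact Or.inl (congrArg Sum.inr (congrArg (Sigma.mk _) (show y = z from h)))
    · exact Or.inr (Or.inl ⟨rfl, h⟩)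
    · exact Or.inr (Or.inr ⟨rfl, h⟩)

/-- The glued tree. -/
noncomputable def S : STree where
  σ := Node κ T
  lt := glt κ T g
  lt_trans := glt_trans κ T g
  wf := glt_wf κ T g
  pred_linear := glt_pred_linear κ T g

theorem S_lt_iff {a b : Node κ T} : (S κ T g).lt a b ↔ glt κ T g a b := Iff.rfl

theorem rank_inl_aux : ∀ (o : Ordinal) (c : κ.ord.ToType), θ c = o →
    (S κ T g).rank (Sum.inl c) = o := by
  intro o
  induction o using Ordinal.induction with
  | _ o IH =>
  intro c hc
  apply le_antisymm
  · rw [STree.rank_eq (S κ T g) (Sum.inl c)]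
    apply Ordinal.iSup_le_iff.2
    rintro ⟨(c' | ⟨i, x⟩), hy⟩
    · have hlt : c' < c := hy
      have h1 : θ c' < o := hc ▸ θ_lt_θ.2 hlt
      rw [Order.succ_le_iff, IH (θ c') h1 c' rfl]
      exact h1
    · exact absurd hy id
  · refine le_of_forall_lt fun β hβ => ?_
    obtain ⟨c', hc'⟩ := θ_surj (o := κ.ord) (lt_trans (hc ▸ hβ) (θ_lt c))
    have hlt : c' < c := θ_lt_θ.1 (by rw [hc']; exact hc ▸ hβ)
    have := (S κ T g).rank_lt_of_lt (x := Sum.inl c') (y := Sum.inl c) hlt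
    rwa [IH β (hc ▸ hβ) c' hc'] at this

theorem rank_inl (c : κ.ord.ToType) : (S κ T g).rank (Sum.inl c) = θ c :=
  rank_inl_aux κ T g _ c rfl

theorem rank_inr_aux : ∀ (o : Ordinal) (i : ι) (x : (T i).σ), (T i).rank x = o →
    (S κ T g).rank (Sum.inr ⟨i, x⟩) = f κ g i + o := by
  intro o
  induction o using Ordinal.induction with
  | _ o IH =>
  intro i x hx
  apply le_antisymm
  · rw [STree.rank_eq (S κ T g) (Sum.inr ⟨i, x⟩)]
    apply Ordinal.iSup_le_iff.2
    rintro ⟨(c' | ⟨j, y⟩), hy⟩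
    · have hlt : θ c' < f κ g i := hy
      rw [Order.succ_le_iff, rank_inl]
      exact lt_of_lt_of_le hlt (le_self_add)
    · obtain ⟨hji, hy'⟩ := hy
      dsimp only at hji; subst hji
      have hry : (T _).rank y < o := hx ▸ (T _).rank_lt_of_lt hy'
      rw [Order.succ_le_iff, IH _ hry _ y rfl]
      exact (add_lt_add_iff_left _).2 hry
  · refine le_of_forall_lt fun β hβ => ?_
    rcases lt_or_ge β (f κ g i) with hcase | hcase
    · obtain ⟨c', hc'⟩ := θ_surj (o := κ.ord) (lt_trans hcase (f_lt κ g i))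
      have hlt : (S κ T g).lt (Sum.inl c') (Sum.inr ⟨i, x⟩) := by
        show θ c' < f κ g i
        rw [hc']; exact hcase
      have := (S κ T g).rank_lt_of_lt hlt
      rwa [rank_inl, hc'] at this
    · set γ := β - f κ g i with hγ
      have hβγ : β = f κ g i + γ := (Ordinal.add_sub_cancel_of_le hcase).symm
      have hγo : γ < o := by
        rw [← add_lt_add_iff_left (f κ g i), ← hβγ]; exact hβ
      -- find y with lt y x and γ ≤ rank y
      have hγr : γ < (T i).rank x := hx ▸ hγo
      rw [STree.rank_eq, Ordinal.lt_iSup_iff] at hγr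
      obtain ⟨⟨y, hyx⟩, hy⟩ := hγr
      rw [Order.lt_succ_iff] at hy
      have h1 : (S κ T g).rank (Sum.inr ⟨i, y⟩) = f κ g i + (T i).rank y :=
        IH _ (hx ▸ (T i).rank_lt_of_lt hyx) i y rfl
      have hlt2 : (S κ T g).lt (Sum.inr ⟨i, y⟩) (Sum.inr ⟨i, x⟩) := ⟨rfl, hyx⟩
      have h2 := (S κ T g).rank_lt_of_lt hlt2
      calc β = f κ g i + γ := hβγ
      _ ≤ f κ g i + (T i).rank y := add_le_add_right hy _
      _ = (S κ T g).rank (Sum.inr ⟨i, y⟩) := h1.symm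
      _ < _ := h2

theorem rank_inr (i : ι) (x : (T i).σ) :
    (S κ T g).rank (Sum.inr ⟨i, x⟩) = f κ g i + (T i).rank x :=
  rank_inr_aux κ T g _ i x rfl

theorem sigma_mk_inj {i : ι} {x y : (T i).σ}
    (h : (⟨i, x⟩ : Σ i, (T i).σ) = ⟨i, y⟩) : x = y :=
  eq_of_heq (Sigma.mk.inj_iff.1 h).2

/-- Pushing a branch of `T i` into the glued tree. -/
def push (i : ι) (B : Set (T i).σ) : Set (Node κ T)
  | Sum.inl c => θ c < f κ g i
  | Sum.inr a => ∃ x ∈ B, a = ⟨i, x⟩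

/-- Pulling back a branch of the glued tree to `T i`. -/
def pull (i : ι) (B : Set (Node κ T)) : Set (T i).σ := {x | Sum.inr ⟨i, x⟩ ∈ B}

theorem mem_push_inl {i : ι} {B : Set (T i).σ} {c : κ.ord.ToType} :
    Sum.inl c ∈ push κ T g i B ↔ θ c < f κ g i := Iff.rfl

theorem mem_push_inr {i : ι} {B : Set (T i).σ} {a : Σ i, (T i).σ} :
    Sum.inr a ∈ push κ T g i B ↔ ∃ x ∈ B, a = ⟨i, x⟩ := Iff.rfl

theorem mem_push_inr' {i : ι} {B : Set (T i).σ} {x : (T i).σ} :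
    Sum.inr ⟨i, x⟩ ∈ push κ T g i B ↔ x ∈ B := by
  rw [mem_push_inr]
  constructor
  · rintro ⟨x', hx', h⟩
    rwa [sigma_mk_inj T h]
  · exact fun h => ⟨x, h, rfl⟩

theorem pull_push {i : ι} {B : Set (T i).σ} : pull κ T i (push κ T g i B) = B := by
  ext x; exact mem_push_inr' κ T g

theorem rank_lt_ord (hκ : ℵ₀ ≤ κ) (hT : ∀ i, IsKurepaTree κ (T i)) (z : Node κ T) :
    (S κ T g).rank z = ϕ κ T g z ∧ (S κ T g).rank z < κ.ord := by
  have hphi : (S κ T g).rank z = ϕ κ T g z := by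
    rcases z with c | ⟨i, x⟩
    · exact rank_inl κ T g c
    · exact rank_inr κ T g i x
  refine ⟨hphi, ?_⟩
  rw [hphi]
  rcases z with c | ⟨i, x⟩
  · exact θ_lt c
  · show f κ g i + (T i).rank x < κ.ord
    rw [Cardinal.lt_ord, Ordinal.card_add]
    exact Cardinal.add_lt_of_lt hκ (Cardinal.lt_ord.1 (f_lt κ g i))
      (Cardinal.lt_ord.1 ((hT i).2.1 x))

theorem push_isCofBranch (hκ : ℵ₀ ≤ κ) (hT : ∀ i, IsKurepaTree κ (T i)) (i : ι)
    {B : Set (T i).σ} (hB : (T i).IsCofBranch κ B) :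
    (S κ T g).IsCofBranch κ (push κ T g i B) := by
  obtain ⟨hdown, hlin, hcof⟩ := hB
  refine ⟨?_, ?_, ?_⟩
  · -- downward closed
    rintro (c | a) hz (c' | a') hlt
    · exact (mem_push_inl κ T g).2 (lt_trans (θ_lt_θ.2 hlt) ((mem_push_inl κ T g).1 hz))
    · exact absurd hlt id
    · obtain ⟨x, hx, rfl⟩ := hz
      exact (mem_push_inl κ T g).2 hlt
    · obtain ⟨x, hx, rfl⟩ := hz
      obtain ⟨h, hlt'⟩ := hlt
      rcases a' with ⟨j, y⟩
      dsimp only at h; subst h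
      exact ⟨y, hdown x hx y hlt', rfl⟩
  · -- chain
    rintro (c | a) hz (c' | a') hz'
    · rcases lt_trichotomy c c' with h | h | h
      · exact Or.inr (Or.inl h)
      · exact Or.inl (by rw [h])
      · exact Or.inr (Or.inr h)
    · obtain ⟨x, hx, rfl⟩ := hz'
      exact Or.inr (Or.inl (show θ c < f κ g i from (mem_push_inl κ T g).1 hz))
    · obtain ⟨x, hx, rfl⟩ := hz
      exact Or.inr (Or.inr (show θ c' < f κ g i from (mem_push_inl κ T g).1 hz'))
    · obtain ⟨x, hx, rfl⟩ := hz
      obtain ⟨y, hy, rfl⟩ := hz'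
      rcases hlin x hx y hy with h | h | h
      · exact Or.inl (by rw [h])
      · exact Or.inr (Or.inl ⟨rfl, h⟩)
      · exact Or.inr (Or.inr ⟨rfl, h⟩)
  · -- cofinal
    intro o ho
    rcases lt_or_ge o (f κ g i) with hcase | hcase
    · obtain ⟨c, hc⟩ := θ_surj (o := κ.ord) ho
      refine ⟨Sum.inl c, ?_, ?_⟩
      · show θ c < f κ g i; rw [hc]; exact hcase
      · rw [rank_inl, hc]
    · have hsub : o - f κ g i < κ.ord := lt_of_le_of_lt (Ordinal.sub_le_self _ _) ho
      obtain ⟨x, hx, hrx⟩ := hcof _ hsub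
      refine ⟨Sum.inr ⟨i, x⟩, ⟨x, hx, rfl⟩, ?_⟩
      rw [rank_inr, hrx, Ordinal.add_sub_cancel_of_le hcase]

theorem push_injective (i : ι) : Function.Injective (push κ T g i) := by
  intro B1 B2 h
  rw [← pull_push (B := B1) (g := g), h, pull_push]

/-- The chain part of the glued tree, as a branch. -/
theorem branch_structure (hκ : ℵ₀ ≤ κ) (hT : ∀ i, IsKurepaTree κ (T i))
    {B : Set (Node κ T)} (hB : (S κ T g).IsCofBranch κ B) :
    B = Set.range Sum.inl ∨
      ∃ i, B = push κ T g i (pull κ T i B) ∧ (T i).IsCofBranch κ (pull κ T i B) := by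
  obtain ⟨hdown, hlin, hcof⟩ := hB
  by_cases hex : ∃ a : Σ i, (T i).σ, Sum.inr a ∈ B
  · right
    obtain ⟨⟨i, x⟩, hix⟩ := hex
    -- the element of rank `f i` in `B` lies in component `i`
    obtain ⟨u, huB, hu⟩ := hcof (f κ g i) (f_lt κ g i)
    have hu' : ∃ x₀ : (T i).σ, u = Sum.inr ⟨i, x₀⟩ := by
      rcases u with c | ⟨j, y⟩
      · rw [rank_inl] at hu
        rcases hlin _ huB _ hix with h | h | h
        · exact absurd h (by simp)
        · have : θ c < f κ g i := h
          rw [hu] at this; exact absurd this (lt_irrefl _)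
        · exact absurd h id
      · rcases hlin _ huB _ hix with h | h | h
        · obtain ⟨h1, h2⟩ := Sigma.mk.inj_iff.1 (Sum.inr.inj h)
          subst h1
          exact ⟨y, rfl⟩
        · obtain ⟨hji, -⟩ := h; dsimp only at hji; subst hji
          exact ⟨y, rfl⟩
        · obtain ⟨hij, -⟩ := h; dsimp only at hij; subst hij
          exact ⟨y, rfl⟩
    obtain ⟨x₀, rfl⟩ := hu'
    -- chain elements of B are below f i
    have hchain : ∀ c : κ.ord.ToType, Sum.inl c ∈ B → θ c < f κ g i := by
      intro c hc
      rcases hlin _ hc _ huB with h | h | h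
      · exact absurd h (by simp)
      · exact h
      · exact absurd h id
    -- tree elements of B are in component i
    have htree : ∀ a : Σ i, (T i).σ, Sum.inr a ∈ B → a.1 = i := by
      intro a ha
      rcases hlin _ ha _ huB with h | h | h
      · exact congrArg Sigma.fst (Sum.inr.inj h)
      · exact h.1
      · exact h.1.symm
    have hpull : (T i).IsCofBranch κ (pull κ T i B) := by
      refine ⟨?_, ?_, ?_⟩
      · intro x hx y hlt
        exact hdown _ hx _ (show glt κ T g (Sum.inr ⟨i, y⟩) (Sum.inr ⟨i, x⟩) from ⟨rfl, hlt⟩)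
      · intro x hx y hy
        rcases hlin _ hx _ hy with h | h | h
        · exact Or.inl (sigma_mk_inj T (Sum.inr.inj h))
        · exact Or.inr (Or.inl ((glt_inr_inr' κ T g).1 h))
        · exact Or.inr (Or.inr ((glt_inr_inr' κ T g).1 h))
      · intro o ho
        have hlt : f κ g i + o < κ.ord := by
          rw [Cardinal.lt_ord, Ordinal.card_add]
          exact Cardinal.add_lt_of_lt hκ (Cardinal.lt_ord.1 (f_lt κ g i))
            (Cardinal.lt_ord.1 ho)
        obtain ⟨z, hzB, hz⟩ := hcof _ hlt
        rcases z with c | ⟨j, y⟩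
        · rw [rank_inl] at hz
          have := hchain c hzB
          rw [hz] at this
          exact absurd this (not_lt_of_ge (le_self_add))
        · have hji := htree _ hzB
          dsimp only at hji; subst hji
          rw [rank_inr] at hz
          refine ⟨y, hzB, ?_⟩
          exact (add_right_inj _).1 hz
    refine ⟨i, ?_, hpull⟩
    ext z
    constructor
    · intro hz
      rcases z with c | ⟨j, y⟩
      · exact hchain c hz
      · have hji := htree _ hz
        dsimp only at hji; subst hji
        exact ⟨y, hz, rfl⟩
    · intro hz
      rcases z with c | ⟨j, y⟩
      · exact hdown _ huB _ (show θ c < f κ g i from hz)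
      · obtain ⟨y', hy', heq⟩ := hz
        obtain ⟨h1, h2⟩ := Sigma.mk.inj_iff.1 heq
        subst h1
        rw [eq_of_heq h2]
        exact hy'
  · left
    push_neg at hex
    ext z
    constructor
    · intro hz
      rcases z with c | a
      · exact ⟨c, rfl⟩
      · exact absurd hz (hex a)
    · rintro ⟨c, rfl⟩
      obtain ⟨z, hzB, hz⟩ := hcof (θ c) (θ_lt c)
      rcases z with c' | a
      · rw [rank_inl] at hz
        rwa [θ_injective hz] at hzB
      · exact absurd hzB (hex a)

noncomputable def levelMap (o : Ordinal) :
    {z : Node κ T // (S κ T g).rank z = o} →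
      {c : κ.ord.ToType // θ c ≤ o} ⊕
        (Σ i : {i : ι // f κ g i ≤ o}, {x : (T i.1).σ // (T i.1).rank x = o - f κ g i.1})
  | ⟨Sum.inl c, h⟩ => Sum.inl ⟨c, by rw [← rank_inl κ T g c]; exact le_of_eq h⟩
  | ⟨Sum.inr ⟨i, x⟩, h⟩ =>
      Sum.inr ⟨⟨i, by rw [← h, rank_inr]; exact le_self_add⟩,
        ⟨x, by
          show (T i).rank x = o - f κ g i
          rw [← ((rank_inr κ T g i x).symm.trans h), Ordinal.add_sub_cancel]⟩⟩

theorem levelMap_injective (o : Ordinal) : Function.Injective (levelMap κ T g o) := by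
  rintro ⟨(c | ⟨i, x⟩), h1⟩ ⟨(c' | ⟨j, y⟩), h2⟩ heq
  · simp only [levelMap, Sum.inl.injEq, Subtype.mk.injEq] at heq
    exact Subtype.ext (congrArg Sum.inl heq)
  · simp only [levelMap] at heq; cases heq
  · simp only [levelMap] at heq; cases heq
  · simp only [levelMap, Sum.inr.injEq, Sigma.mk.inj_iff, Subtype.mk.injEq] at heq
    obtain ⟨hij, hxy⟩ := heq
    subst hij
    rw [heq_eq_eq, Subtype.mk.injEq] at hxy
    subst hxy
    rfl

theorem levels_small (hκ : ℵ₀ ≤ κ) (hreg : κ.IsRegular) (hT : ∀ i, IsKurepaTree κ (T i))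
    (o : Ordinal) : #{z : Node κ T // (S κ T g).rank z = o} < κ := by
  rcases lt_or_ge o κ.ord with ho | ho
  · -- main case
    have hA : #{c : κ.ord.ToType // θ c ≤ o} < κ := by
      have ho' : Order.succ o < κ.ord := (Cardinal.isSuccLimit_ord hκ).succ_lt ho
      obtain ⟨c₀, hc₀⟩ := θ_surj (o := κ.ord) ho'
      have hset : ∀ c : κ.ord.ToType, θ c ≤ o ↔ c < c₀ := by
        intro c
        rw [← θ_lt_θ, hc₀, Order.lt_succ_iff]
      calc #{c : κ.ord.ToType // θ c ≤ o}
          = #{c : κ.ord.ToType // c < c₀} := Cardinal.mk_congr (Equiv.subtypeEquivRight hset)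
        _ = (θ c₀).card := @Ordinal.card_typein κ.ord.ToType (· < ·) isWellOrder_lt c₀
        _ < κ := by
            rw [hc₀]
            rw [Cardinal.lt_ord] at ho'
            exact ho'
    have hI : #{i : ι // f κ g i ≤ o} < κ := by
      have hinj : Function.Injective
          (fun p : {i : ι // f κ g i ≤ o} => (⟨g p.1, p.2⟩ : {c : κ.ord.ToType // θ c ≤ o})) :=
        fun p q h => Subtype.ext (g.injective (congrArg Subtype.val h))
      exact lt_of_le_of_lt (Cardinal.mk_le_of_injective hinj) hA
    have hSig : #(Σ i : {i : ι // f κ g i ≤ o},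
        {x : (T i.1).σ // (T i.1).rank x = o - f κ g i.1}) < κ := by
      rw [Cardinal.mk_sigma]
      exact Cardinal.sum_lt_of_isRegular hreg hI fun i => (hT i.1).2.2.2.1 _
    refine lt_of_le_of_lt (Cardinal.mk_le_of_injective (levelMap_injective κ T g o)) ?_
    rw [Cardinal.mk_sum, Cardinal.lift_id, Cardinal.lift_id]
    exact Cardinal.add_lt_of_lt hκ hA hSig
  · -- level is empty
    have : IsEmpty {z : Node κ T // (S κ T g).rank z = o} := by
      refine ⟨fun z => ?_⟩
      have := (rank_lt_ord κ T g hκ hT z.1).2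
      rw [z.2] at this
      exact absurd ho (not_le_of_gt this)
    rw [Cardinal.mk_eq_zero]
    exact lt_of_lt_of_le Cardinal.aleph0_pos hκ

theorem push_eq_of_sigma_eq
    {p q : Σ i : ι, {B : Set (T i).σ // (T i).IsCofBranch κ B}} (h : p = q) :
    push κ T g p.1 p.2.1 = push κ T g q.1 q.2.1 := by rw [h]

theorem branchCard_le (hκ : ℵ₀ ≤ κ) (hT : ∀ i, IsKurepaTree κ (T i)) :
    (S κ T g).branchCard κ ≤ (Cardinal.sum fun i => (T i).branchCard κ) + 1 := by
  classical
  set Φ : {B : Set (Node κ T) // (S κ T g).IsCofBranch κ B} →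
      Option (Σ i : ι, {B : Set (T i).σ // (T i).IsCofBranch κ B}) :=
    fun B => if h : ∃ i, B.1 = push κ T g i (pull κ T i B.1) ∧
        (T i).IsCofBranch κ (pull κ T i B.1)
      then some ⟨h.choose, ⟨pull κ T h.choose B.1, h.choose_spec.2⟩⟩ else none
    with hΦ
  have hinj : Function.Injective Φ := by
    intro B1 B2 h
    by_cases h1 : ∃ i, B1.1 = push κ T g i (pull κ T i B1.1) ∧
        (T i).IsCofBranch κ (pull κ T i B1.1)
    · by_cases h2 : ∃ i, B2.1 = push κ T g i (pull κ T i B2.1) ∧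
          (T i).IsCofBranch κ (pull κ T i B2.1)
      · rw [hΦ] at h
        simp only [dif_pos h1, dif_pos h2] at h
        have hsig := Option.some.inj h
        have hpush := push_eq_of_sigma_eq κ T g hsig
        apply Subtype.ext
        rw [h1.choose_spec.1, h2.choose_spec.1]
        exact hpush
      · rw [hΦ] at h
        simp only [dif_pos h1, dif_neg h2] at h
        cases h
    · by_cases h2 : ∃ i, B2.1 = push κ T g i (pull κ T i B2.1) ∧
          (T i).IsCofBranch κ (pull κ T i B2.1)
      · rw [hΦ] at h
        simp only [dif_neg h1, dif_pos h2] at h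
        cases h
      · have e1 := (branch_structure κ T g hκ hT B1.2).resolve_right h1
        have e2 := (branch_structure κ T g hκ hT B2.2).resolve_right h2
        exact Subtype.ext (e1.trans e2.symm)
  refine le_trans (Cardinal.mk_le_of_injective hinj) ?_
  rw [Cardinal.mk_option, Cardinal.mk_sigma]
  rfl

theorem branchCard_ge (hκ : ℵ₀ ≤ κ) (hT : ∀ i, IsKurepaTree κ (T i)) (i : ι) :
    (T i).branchCard κ ≤ (S κ T g).branchCard κ := by
  have hinj : Function.Injective
      (fun B : {B : Set (T i).σ // (T i).IsCofBranch κ B} =>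
        (⟨push κ T g i B.1, push_isCofBranch κ T g hκ hT i B.2⟩ :
          {B : Set (Node κ T) // (S κ T g).IsCofBranch κ B})) :=
    fun B1 B2 h => Subtype.ext (push_injective κ T g i (congrArg Subtype.val h))
  exact Cardinal.mk_le_of_injective hinj

theorem branchCard_eq [Nonempty ι] (hκ : ℵ₀ ≤ κ) (hreg : κ.IsRegular)
    (hT : ∀ i, IsKurepaTree κ (T i)) :
    (S κ T g).branchCard κ = ⨆ i, (T i).branchCard κ := by
  have hbdd := Cardinal.bddAbove_range fun i => (T i).branchCard κ
  have hle : ∀ i, (T i).branchCard κ ≤ ⨆ i, (T i).branchCard κ := fun i => le_ciSup hbdd i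
  have hκsup : κ ≤ ⨆ i, (T i).branchCard κ := by
    obtain ⟨i⟩ := ‹Nonempty ι›
    exact le_trans (le_trans (Order.le_succ κ) ((hT i).2.2.2.2)) (hle i)
  have hsup_inf : ℵ₀ ≤ ⨆ i, (T i).branchCard κ := le_trans hκ hκsup
  apply le_antisymm
  · refine le_trans (branchCard_le κ T g hκ hT) ?_
    have h1 : (Cardinal.sum fun i => (T i).branchCard κ) ≤ ⨆ i, (T i).branchCard κ := by
      refine le_trans (Cardinal.sum_le_mk_mul_iSup _) ?_
      calc #ι * (⨆ i, (T i).branchCard κ)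
          ≤ (⨆ i, (T i).branchCard κ) * (⨆ i, (T i).branchCard κ) := by
            apply mul_le_mul_left
            exact le_trans (le_trans (Cardinal.mk_le_of_injective g.injective)
              (by rw [Cardinal.mk_toType, Cardinal.card_ord])) hκsup
        _ = ⨆ i, (T i).branchCard κ := Cardinal.mul_eq_self hsup_inf
    calc (Cardinal.sum fun i => (T i).branchCard κ) + 1
        ≤ (⨆ i, (T i).branchCard κ) + (⨆ i, (T i).branchCard κ) :=
          add_le_add h1 (le_trans Cardinal.one_le_aleph0 hsup_inf)
      _ = ⨆ i, (T i).branchCard κ := Cardinal.add_eq_self hsup_inf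
  · exact ciSup_le' fun i => branchCard_ge κ T g hκ hT i

theorem S_isKurepa [Nonempty ι] (hκ : ℵ₀ ≤ κ) (hreg : κ.IsRegular)
    (hT : ∀ i, IsKurepaTree κ (T i)) : IsKurepaTree κ (S κ T g) := by
  refine ⟨hκ, fun z => (rank_lt_ord κ T g hκ hT z).2, ?_, levels_small κ T g hκ hreg hT, ?_⟩
  · intro o ho
    obtain ⟨c, hc⟩ := θ_surj (o := κ.ord) ho
    exact ⟨Sum.inl c, by rw [rank_inl, hc]⟩
  · obtain ⟨i⟩ := ‹Nonempty ι›
    exact le_trans ((hT i).2.2.2.2) (branchCard_ge κ T g hκ hT i)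

end KGlue


theorem stmt1 (κ : Cardinal) (hκ : ℵ₀ ≤ κ) (hreg : κ.IsRegular)
    (ι : Type) [Nonempty ι] (hι : #ι ≤ κ)
    (T : ι → STree) (k : ι → Cardinal)
    (hT : ∀ i, IsKurepaTree κ (T i))
    (hk : ∀ i, (T i).branchCard κ = k i) :
    ∃ S : STree, IsKurepaTree κ S ∧ S.branchCard κ = ⨆ i, k i := by
  have hmk : #ι ≤ #κ.ord.ToType := by rw [Cardinal.mk_toType, Cardinal.card_ord]; exact hι
  obtain ⟨g⟩ : Nonempty (ι ↪ κ.ord.ToType) := Cardinal.le_def _ _ |>.1 hmk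
  refine ⟨KGlue.S κ T g, KGlue.S_isKurepa κ T g hκ hreg hT, ?_⟩
  rw [KGlue.branchCard_eq κ T g hκ hreg hT]
  exact iSup_congr hk
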